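/- The space of vector polynomials p of degree at most ℓ+1 on ℝ² satisfying div σ(p) = 0, where σ(p) = 2μ ε(p) + λ (tr ε(p)) I with ε(p) the symmetric gradient and μ > 0, λ + μ > 0, has dimension 4ℓ + 6. -/

import Mathlib

open MvPolynomial

/-- The symmetric gradient (small strain) of a polynomial vector field on ℝ². -/
noncomputable def polyStrain (p : Fin 2 → MvPolynomial (Fin 2) ℝ) (i j : Fin 2) :
    MvPolynomial (Fin 2) ℝ :=
  C (1 / 2 : ℝ) * (pderiv i (p j) + pderiv j (p i))

/-- Isotropic elasticity stress σ(p) = 2μ ε(p) + λ (tr ε(p)) I. -/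
noncomputable def polyStress (μ lam : ℝ) (p : Fin 2 → MvPolynomial (Fin 2) ℝ)
    (i j : Fin 2) : MvPolynomial (Fin 2) ℝ :=
  C (2 * μ) * polyStrain p i j +
    if i = j then C lam * (polyStrain p 0 0 + polyStrain p 1 1) else 0

/-- Componentwise divergence of the stress, (div σ(p))ᵢ = Σⱼ ∂ⱼ σ(p)ᵢⱼ. -/
noncomputable def polyDivStress (μ lam : ℝ) (p : Fin 2 → MvPolynomial (Fin 2) ℝ)
    (i : Fin 2) : MvPolynomial (Fin 2) ℝ :=
  ∑ j : Fin 2, pderiv j (polyStress μ lam p i j)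

namespace Stmt2Aux

abbrev MP : Type := MvPolynomial (Fin 2) ℝ

noncomputable def pd (i : Fin 2) : MP →ₗ[ℝ] MP := (pderiv i : Derivation ℝ _ _).toLinearMap

@[simp] lemma pd_apply (i : Fin 2) (f : MP) : pd i f = pderiv i f := rfl

lemma fsum (d : Fin 2 →₀ ℕ) : (d.sum fun _ e => e) = d 0 + d 1 := by
  rw [Finsupp.sum_fintype _ _ (fun _ => rfl)]
  exact Fin.sum_univ_two _

lemma pderiv_commute (i j : Fin 2) (f : MP) :
    pderiv i (pderiv j f) = pderiv j (pderiv i f) := by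
  induction f using MvPolynomial.induction_on' with
  | monomial u a =>
    rcases eq_or_ne i j with rfl | hij
    · rfl
    · simp only [pderiv_monomial]
      have h1 : u - Finsupp.single j 1 - Finsupp.single i 1
          = u - Finsupp.single i 1 - Finsupp.single j 1 := by
        ext k; simp only [Finsupp.coe_tsub, Pi.sub_apply]; omega
      have h2 : (u - Finsupp.single j 1 : Fin 2 →₀ ℕ) i = u i := by
        rw [Finsupp.tsub_apply, Finsupp.single_eq_of_ne' (Ne.symm hij), Nat.sub_zero]
      have h3 : (u - Finsupp.single i 1 : Fin 2 →₀ ℕ) j = u j := by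
        rw [Finsupp.tsub_apply, Finsupp.single_eq_of_ne' hij, Nat.sub_zero]
      rw [h1, h2, h3]; ring_nf
  | add p q hp hq => simp [hp, hq]

lemma totalDegree_pderiv_le (f : MP) (i : Fin 2) (n : ℕ) (h : f.totalDegree ≤ n + 1) :
    (pderiv i f).totalDegree ≤ n := by
  conv_lhs => rw [f.as_sum, map_sum]
  refine (totalDegree_finset_sum _ _).trans (Finset.sup_le fun d hd => ?_)
  rw [pderiv_monomial]
  rcases eq_or_ne (d i) 0 with h0 | h0
  · simp [h0]
  · refine (totalDegree_monomial_le _ _).trans ?_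
    have hds : (d.sum fun _ e => e) ≤ n + 1 := le_trans (le_totalDegree hd) h
    refine le_of_eq_of_le (fsum _) ?_
    rw [fsum] at hds
    rw [Finsupp.tsub_apply, Finsupp.tsub_apply]
    fin_cases i <;> simp [Finsupp.single_apply] at h0 ⊢ <;> omega


lemma pderiv_two (i : Fin 2) : pderiv i (2 : MP) = 0 := by
  rw [← map_ofNat (C : ℝ →+* MP) 2, pderiv_C]

noncomputable def lapL : MP →ₗ[ℝ] MP := (pd 0 ∘ₗ pd 0) + (pd 1 ∘ₗ pd 1)

lemma lapL_apply (f : MP) :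
    lapL f = pderiv 0 (pderiv 0 f) + pderiv 1 (pderiv 1 f) := rfl

lemma totalDegree_lapL_le (f : MP) (n : ℕ) (h : f.totalDegree ≤ n + 2) :
    (lapL f).totalDegree ≤ n := by
  rw [lapL_apply]
  exact (totalDegree_add _ _).trans (max_le
    (totalDegree_pderiv_le _ _ _ (totalDegree_pderiv_le _ _ (n+1) h))
    (totalDegree_pderiv_le _ _ _ (totalDegree_pderiv_le _ _ (n+1) h)))

lemma key1 (a b : ℕ) : pderiv (0 : Fin 2) (pderiv 0 ((X 0 ^ (a+2) * X 1 ^ b : MP)))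
    = ((a+2)*(a+1) : ℝ) • (X 0 ^ a * X 1 ^ b) := by
  simp [pderiv_mul, pderiv_pow, pderiv_X_of_ne, pderiv_two]
  rw [smul_eq_C_mul]
  simp only [C_mul, C_add, C_eq_coe_nat, map_ofNat, C_1]
  ring

lemma key2 (a b : ℕ) (hb : 2 ≤ b) : pderiv (1 : Fin 2) (pderiv 1 ((X 0 ^ (a+2) * X 1 ^ b : MP)))
    = ((b*(b-1) : ℕ) : ℝ) • (X 0 ^ (a+2) * X 1 ^ (b-2)) := by
  simp only [pderiv_mul, pderiv_pow, pderiv_X_of_ne, pderiv_two, pderiv_X_self]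
  simp [pderiv_mul, pderiv_pow, pderiv_X_of_ne, pderiv_two]
  rw [smul_eq_C_mul, show b - 1 - 1 = b - 2 from by omega]
  simp only [C_mul, C_eq_coe_nat, Nat.cast_mul]
  ring

lemma key2' (a b : ℕ) (hb : b < 2) :
    pderiv (1 : Fin 2) (pderiv 1 ((X 0 ^ (a+2) * X 1 ^ b : MP))) = 0 := by
  interval_cases b <;>
    simp [pderiv_mul, pderiv_pow, pderiv_X_of_ne, pderiv_two, pderiv_X_self]

lemma deg_pow_mul_le (a b : ℕ) : ((X 0 ^ a * X 1 ^ b : MP)).totalDegree ≤ a + b := by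
  refine (totalDegree_mul _ _).trans ?_
  simp [totalDegree_X_pow]

lemma exists_lap_pow : ∀ b a : ℕ, ∃ u : MP,
    lapL u = X 0 ^ a * X 1 ^ b ∧ u.totalDegree ≤ a + b + 2 := by
  intro b
  induction b using Nat.strong_induction_on with
  | _ b IH =>
    intro a
    have hc : (((a:ℝ)+2)*((a:ℝ)+1)) ≠ 0 := by positivity
    rcases lt_or_ge b 2 with hb | hb
    · refine ⟨(((a:ℝ)+2)*((a:ℝ)+1))⁻¹ • (X 0 ^ (a+2) * X 1 ^ b), ?_, ?_⟩
      · rw [map_smul, lapL_apply, key1, key2' _ _ hb, add_zero, smul_smul]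
        push_cast
        rw [inv_mul_cancel₀ hc, one_smul]
      · exact (totalDegree_smul_le _ _).trans
          ((deg_pow_mul_le _ _).trans (by omega))
    · obtain ⟨w, hw, hdw⟩ := IH (b - 2) (by omega) (a + 2)
      refine ⟨(((a:ℝ)+2)*((a:ℝ)+1))⁻¹ •
        (X 0 ^ (a+2) * X 1 ^ b - ((b*(b-1):ℕ):ℝ) • w), ?_, ?_⟩
      · rw [map_smul, map_sub, map_smul, hw, lapL_apply, key1, key2 _ _ hb,
          add_sub_assoc, sub_self, add_zero, smul_smul]
        push_cast
        rw [inv_mul_cancel₀ hc, one_smul]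
      · refine (totalDegree_smul_le _ _).trans ((totalDegree_sub _ _).trans (max_le
          ((deg_pow_mul_le _ _).trans (by omega))
          ((totalDegree_smul_le _ _).trans (by omega))))


lemma monomial_eq_smul (d : Fin 2 →₀ ℕ) (c : ℝ) :
    (monomial d c : MP) = c • (X 0 ^ (d 0) * X 1 ^ (d 1)) := by
  rw [smul_eq_C_mul, monomial_eq]
  congr 1
  rw [Finsupp.prod_pow]
  exact Fin.prod_univ_two _

lemma exists_lap (f : MP) : ∃ u : MP, lapL u = f ∧ u.totalDegree ≤ f.totalDegree + 2 := by
  choose g hg hdeg using fun d : Fin 2 →₀ ℕ => exists_lap_pow (d 1) (d 0)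
  refine ⟨∑ d ∈ f.support, coeff d f • g d, ?_, ?_⟩
  · rw [map_sum]
    conv_rhs => rw [f.as_sum]
    refine Finset.sum_congr rfl fun d hd => ?_
    rw [map_smul, hg, monomial_eq_smul]
  · refine (totalDegree_finset_sum _ _).trans (Finset.sup_le fun d hd => ?_)
    refine (totalDegree_smul_le _ _).trans ((hdeg d).trans ?_)
    have h2 := le_totalDegree hd
    rw [fsum] at h2
    omega

noncomputable def divP : (Fin 2 → MP) →ₗ[ℝ] MP :=
  pd 0 ∘ₗ LinearMap.proj 0 + pd 1 ∘ₗ LinearMap.proj 1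

lemma divP_apply (p : Fin 2 → MP) : divP p = pderiv 0 (p 0) + pderiv 1 (p 1) := rfl

noncomputable def TL (μ lam : ℝ) : (Fin 2 → MP) →ₗ[ℝ] (Fin 2 → MP) :=
  LinearMap.pi fun i => μ • (lapL ∘ₗ LinearMap.proj i) + (lam + μ) • (pd i ∘ₗ divP)

lemma TL_apply (μ lam : ℝ) (p : Fin 2 → MP) (i : Fin 2) :
    TL μ lam p i = μ • lapL (p i) + (lam + μ) • pderiv i (divP p) := rfl

lemma lapL_pderiv (i : Fin 2) (v : MP) : lapL (pderiv i v) = pderiv i (lapL v) := by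
  simp only [lapL_apply, map_add]
  rw [pderiv_commute 0 i, pderiv_commute 0 i, pderiv_commute 1 i, pderiv_commute 1 i]

lemma TL_surj (μ lam : ℝ) (hμ : μ ≠ 0) (h2 : lam + 2*μ ≠ 0) (f : Fin 2 → MP) (n : ℕ)
    (hf : ∀ i, (f i).totalDegree ≤ n) :
    ∃ p : Fin 2 → MP, (∀ i, (p i).totalDegree ≤ n + 2) ∧ TL μ lam p = f := by
  choose u hu hdu using fun i => exists_lap (f i)
  have hdu' : ∀ i, (u i).totalDegree ≤ n + 2 := fun i => (hdu i).trans (by have := hf i; omega)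
  obtain ⟨v, hv, hdv⟩ := exists_lap (divP u)
  have hddiv : (divP u).totalDegree ≤ n + 1 := by
    rw [divP_apply]
    exact (totalDegree_add _ _).trans (max_le
      (totalDegree_pderiv_le _ _ _ (hdu' 0)) (totalDegree_pderiv_le _ _ _ (hdu' 1)))
  set c : ℝ := -(lam+μ)/(μ*(lam+2*μ)) with hc
  refine ⟨fun i => μ⁻¹ • u i + c • pderiv i v, fun i => ?_, ?_⟩
  · refine (totalDegree_add _ _).trans (max_le
      ((totalDegree_smul_le _ _).trans (hdu' i))
      ((totalDegree_smul_le _ _).trans (totalDegree_pderiv_le _ _ _ (hdv.trans (by omega)))))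
  · funext i
    rw [TL_apply]
    have hdiv : divP (fun i => μ⁻¹ • u i + c • pderiv i v) = (μ⁻¹ + c) • divP u := by
      simp only [divP_apply, map_add, Derivation.map_smul]
      have h := hv
      rw [lapL_apply] at h
      rw [show ∀ x y z w : MP, μ⁻¹ • x + c • y + (μ⁻¹ • z + c • w)
            = μ⁻¹ • (x + z) + c • (y + w) from fun x y z w => by module]
      rw [h, ← divP_apply]
      module
    rw [hdiv]
    simp only [map_add, map_smul, Derivation.map_smul, hu, lapL_pderiv, hv]
    simp only [smul_add, smul_smul]
    have hK : μ * c + (lam + μ) * μ⁻¹ + (lam + μ) * c = 0 := by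
      rw [hc]; field_simp [show lam + μ * 2 ≠ 0 by rwa [mul_comm] at h2]; ring
    have h1 : μ * μ⁻¹ = 1 := mul_inv_cancel₀ hμ
    calc (μ * μ⁻¹) • f i + (μ * c) • pderiv i (divP u)
          + ((lam + μ) * (μ⁻¹ + c)) • pderiv i (divP u)
        = (μ * μ⁻¹) • f i
          + ((μ * c + (lam + μ) * μ⁻¹ + (lam + μ) * c)) • pderiv i (divP u) := by module
      _ = f i := by rw [hK, h1, one_smul, zero_smul, add_zero]


lemma polyDivStress_eq (μ lam : ℝ) (p : Fin 2 → MP) (i : Fin 2) :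
    polyDivStress μ lam p i = TL μ lam p i := by
  rw [TL_apply, lapL_apply, divP_apply]
  fin_cases i
  · simp only [polyDivStress, polyStress, polyStrain, Fin.sum_univ_two, ← smul_eq_C_mul,
      map_add, Derivation.map_smul, Fin.mk_zero, Fin.mk_one, Fin.reduceEq, reduceIte,
      Fin.isValue, smul_zero, add_zero, map_zero, smul_add]
    rw [pderiv_commute 1 0 (p 1)]
    module
  · simp only [polyDivStress, polyStress, polyStrain, Fin.sum_univ_two, ← smul_eq_C_mul,
      map_add, Derivation.map_smul, Fin.mk_zero, Fin.mk_one, Fin.reduceEq, reduceIte,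
      Fin.isValue, smul_zero, add_zero, map_zero, smul_add]
    rw [pderiv_commute 0 1 (p 0)]
    module

lemma totalDegree_TL_le (μ lam : ℝ) (n : ℕ) (p : Fin 2 → MP)
    (hp : ∀ i, (p i).totalDegree ≤ n + 2) (i : Fin 2) :
    ((TL μ lam p) i).totalDegree ≤ n := by
  rw [TL_apply]
  refine (totalDegree_add _ _).trans (max_le
    ((totalDegree_smul_le _ _).trans (totalDegree_lapL_le _ _ (hp i)))
    ((totalDegree_smul_le _ _).trans (totalDegree_pderiv_le _ _ _ ?_)))
  rw [divP_apply]
  exact (totalDegree_add _ _).trans (max_le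
    (totalDegree_pderiv_le _ _ _ (hp 0)) (totalDegree_pderiv_le _ _ _ (hp 1)))

lemma pderiv_eq_zero_of_deg_eq_zero (f : MP) (i : Fin 2) (h : f.totalDegree = 0) :
    pderiv i f = 0 := by
  conv_lhs => rw [f.as_sum, map_sum]
  refine Finset.sum_eq_zero fun d hd => ?_
  rw [pderiv_monomial, (totalDegree_eq_zero_iff _ f).mp h d hd i]
  simp

lemma TL_eq_zero_of_deg_le_one (μ lam : ℝ) (p : Fin 2 → MP)
    (hp : ∀ i, (p i).totalDegree ≤ 1) : TL μ lam p = 0 := by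
  have h2 : ∀ (i j : Fin 2) (f : MP), f.totalDegree ≤ 1 → pderiv i (pderiv j f) = 0 := by
    intro i j f hf
    apply pderiv_eq_zero_of_deg_eq_zero
    exact Nat.le_zero.mp (totalDegree_pderiv_le _ _ 0 hf)
  funext i
  rw [show (0 : Fin 2 → MP) i = 0 from rfl, TL_apply, lapL_apply, divP_apply, map_add]
  rw [h2 0 0 _ (hp i), h2 1 1 _ (hp i), h2 i 0 _ (hp 0), h2 i 1 _ (hp 1)]
  simp

/- ## Counting -/

def Tfin (n : ℕ) : Finset (ℕ × ℕ) :=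
  (Finset.range (n+1)).biUnion fun k => Finset.HasAntidiagonal.antidiagonal k

lemma mem_Tfin (n : ℕ) (x : ℕ × ℕ) : x ∈ Tfin n ↔ x.1 + x.2 ≤ n := by
  simp only [Tfin, Finset.mem_biUnion, Finset.mem_range, Finset.HasAntidiagonal.mem_antidiagonal]
  constructor
  · rintro ⟨k, hk, rfl⟩; omega
  · intro h; exact ⟨x.1 + x.2, by omega, rfl⟩

lemma card_Tfin (n : ℕ) : (Tfin n).card * 2 = (n+1)*(n+2) := by
  rw [Tfin, Finset.card_biUnion]
  · have h1 : ∀ k ∈ Finset.range (n+1), (Finset.HasAntidiagonal.antidiagonal k).card = k + 1 :=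
      fun k _ => Finset.Nat.card_antidiagonal k
    rw [Finset.sum_congr rfl h1]
    have h2 := Finset.sum_range_id_mul_two (n+2)
    rw [Finset.sum_range_succ' (fun i => i) (n+1)] at h2
    have h4 : (n+2)*(n+2-1) = (n+1)*(n+2) := by
      rw [show n+2-1 = n+1 from rfl]; ring
    rw [h4] at h2
    simp only [add_zero] at h2
    omega
  · intro a _ b _ hab
    refine Finset.disjoint_left.mpr fun x hxa hxb => hab ?_
    rw [Finset.HasAntidiagonal.mem_antidiagonal] at hxa hxb
    omega

noncomputable def idxEquiv (n : ℕ) :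
    ↥{d : Fin 2 →₀ ℕ | (d.sum fun _ e => e) ≤ n} ≃ {x : ℕ × ℕ // x ∈ Tfin n} where
  toFun s := ⟨(s.1 0, s.1 1), by
    rw [mem_Tfin]
    have := s.2
    rw [Set.mem_setOf_eq, fsum] at this
    exact this⟩
  invFun x := ⟨Finsupp.single 0 x.1.1 + Finsupp.single 1 x.1.2, by
    have := (mem_Tfin _ _).mp x.2
    rw [Set.mem_setOf_eq, fsum]
    simp [Finsupp.single_apply]
    omega⟩
  left_inv s := Subtype.ext (Finsupp.ext fun k => by
    fin_cases k <;> simp [Finsupp.single_apply])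
  right_inv x := Subtype.ext (Prod.ext (by simp [Finsupp.single_apply])
    (by simp [Finsupp.single_apply]))

lemma finrank_restrict_mul_two (n : ℕ) :
    Module.finrank ℝ (restrictTotalDegree (Fin 2) ℝ n) * 2 = (n+1)*(n+2) := by
  classical
  letI : Fintype ↥{d : Fin 2 →₀ ℕ | (d.sum fun _ e => e) ≤ n} :=
    Fintype.ofEquiv _ (idxEquiv n).symm
  have hb : Module.finrank ℝ (restrictTotalDegree (Fin 2) ℝ n)
      = Fintype.card ↥{d : Fin 2 →₀ ℕ | (d.sum fun _ e => e) ≤ n} :=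
    Module.finrank_eq_card_basis
      (basisRestrictSupport ℝ {d : Fin 2 →₀ ℕ | (d.sum fun _ e => e) ≤ n})
  rw [hb, Fintype.card_congr (idxEquiv n), Fintype.card_coe, card_Tfin]

noncomputable def incl (n : ℕ) :
    (Fin 2 → restrictTotalDegree (Fin 2) ℝ n) →ₗ[ℝ] (Fin 2 → MP) :=
  LinearMap.pi fun i => (restrictTotalDegree (Fin 2) ℝ n).subtype ∘ₗ LinearMap.proj i

lemma incl_apply (n : ℕ) (q : Fin 2 → restrictTotalDegree (Fin 2) ℝ n) (i : Fin 2) :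
    incl n q i = (q i : MP) := rfl

lemma incl_inj (n : ℕ) : Function.Injective (incl n) :=
  fun q q' h => funext fun i => Subtype.ext (congrFun h i)

lemma mem_range_incl (n : ℕ) (p : Fin 2 → MP) :
    p ∈ LinearMap.range (incl n) ↔ ∀ i, (p i).totalDegree ≤ n := by
  constructor
  · rintro ⟨q, rfl⟩ i
    exact (mem_restrictTotalDegree _ _ _).mp (q i).2
  · intro h
    exact ⟨fun i => ⟨p i, (mem_restrictTotalDegree _ _ _).mpr (h i)⟩, rfl⟩

set_option synthInstance.maxHeartbeats 1000000 in
lemma finrank_dom_mul_two (n : ℕ) :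
    Module.finrank ℝ (Fin 2 → restrictTotalDegree (Fin 2) ℝ n) = (n+1)*(n+2) := by
  rw [Module.finrank_pi_fintype, Fin.sum_univ_two, ← two_mul, mul_comm,
    finrank_restrict_mul_two]

end Stmt2Aux

open Stmt2Aux
set_option maxHeartbeats 2000000
set_option synthInstance.maxHeartbeats 2000000

/-- the space H̃_{ℓ+1} of vector polynomials of degree ≤ ℓ+1 on ℝ²
with div σ(p) = 0 (μ > 0, λ + μ > 0) has dimension 4ℓ + 6. -/
theorem stmt_2 (ℓ : ℕ) (μ lam : ℝ) (hμ : 0 < μ) (hlam : 0 < lam + μ) :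
    Module.finrank ℝ
      ↥(Submodule.span ℝ
        {p : Fin 2 → MvPolynomial (Fin 2) ℝ |
          (∀ i, (p i).totalDegree ≤ ℓ + 1) ∧ ∀ i, polyDivStress μ lam p i = 0}) =
    4 * ℓ + 6 := by
  classical
  set φ : (Fin 2 → restrictTotalDegree (Fin 2) ℝ (ℓ+1)) →ₗ[ℝ] (Fin 2 → MP) :=
    TL μ lam ∘ₗ incl (ℓ+1) with hφ
  have hset : {p : Fin 2 → MvPolynomial (Fin 2) ℝ |
      (∀ i, (p i).totalDegree ≤ ℓ + 1) ∧ ∀ i, polyDivStress μ lam p i = 0}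
      = ↑(Submodule.map (incl (ℓ+1)) (LinearMap.ker φ)) := by
    ext p
    simp only [Set.mem_setOf_eq, SetLike.mem_coe, Submodule.mem_map, LinearMap.mem_ker, hφ,
      LinearMap.comp_apply]
    constructor
    · rintro ⟨hdeg, hdiv⟩
      obtain ⟨q, rfl⟩ := (mem_range_incl _ _).mpr hdeg
      exact ⟨q, funext fun i => by rw [← polyDivStress_eq]; exact hdiv i, rfl⟩
    · rintro ⟨q, hq, rfl⟩
      refine ⟨(mem_range_incl _ _).mp ⟨q, rfl⟩, fun i => ?_⟩
      rw [polyDivStress_eq, hq]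
      rfl
  rw [hset, Submodule.span_eq]
  have e1 : Module.finrank ℝ ↥(Submodule.map (incl (ℓ+1)) (LinearMap.ker φ))
      = Module.finrank ℝ ↥(LinearMap.ker φ) :=
    (LinearEquiv.finrank_eq (Submodule.equivMapOfInjective (incl (ℓ+1)) (incl_inj (ℓ+1)) (LinearMap.ker φ))).symm
  rw [e1]
  have hrn := LinearMap.finrank_range_add_finrank_ker φ
  rw [finrank_dom_mul_two] at hrn
  rcases Nat.eq_zero_or_pos ℓ with rfl | hℓ
  · have hker : LinearMap.ker φ = ⊤ := by
      rw [eq_top_iff]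
      intro q _
      rw [LinearMap.mem_ker, hφ, LinearMap.comp_apply]
      exact TL_eq_zero_of_deg_le_one μ lam _ ((mem_range_incl _ _).mp ⟨q, rfl⟩)
    rw [hker, finrank_top, finrank_dom_mul_two]
  · obtain ⟨m, rfl⟩ : ∃ m, ℓ = m + 1 := ⟨ℓ - 1, by omega⟩
    have h2μ : lam + 2*μ ≠ 0 := by nlinarith
    have hrange : LinearMap.range φ = LinearMap.range (incl m) := by
      apply le_antisymm
      · rintro _ ⟨q, rfl⟩
        rw [hφ, LinearMap.comp_apply, mem_range_incl]
        intro i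
        refine totalDegree_TL_le μ lam m _ (fun j => ?_) i
        exact (mem_range_incl _ _).mp ⟨q, rfl⟩ j
      · rintro _ ⟨f, rfl⟩
        obtain ⟨p, hdp, hTp⟩ := TL_surj μ lam hμ.ne' h2μ (incl m f) m
          (fun i => (mem_range_incl _ _).mp ⟨f, rfl⟩ i)
        obtain ⟨q, rfl⟩ := (mem_range_incl (m+1+1) p).mpr hdp
        exact ⟨q, by rw [hφ, LinearMap.comp_apply, hTp]⟩
    rw [hrange, LinearMap.finrank_range_of_inj (incl_inj m), finrank_dom_mul_two] at hrn
    have h5 : (m+1)*(m+2) = m*m+3*m+2 := by ring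
    have h6 : (m+1+1+1)*(m+1+1+2) = m*m+7*m+12 := by ring
    omega
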